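/- Let H be a hypothesis class, let H' ⊆ H be a set of hypotheses with H' ⊆ B_H(h, 2r) for some h ∈ H' and some r > 0, and let h' ∈ H' satisfy D_S(h, h') ≥ r/2. If DIS_S(H') is nonempty, then D_{DIS_S(H')}(h, h') ≥ (n·r) / (2·|DIS_S(B_H(h, 2r))|). -/
import Mathlib


open scoped Classical

/-- Distance between two hypotheses on a finite set `T`:
fraction of points of `T` on which they disagree. -/
noncomputable def hypDist {α : Type*} (T : Finset α) (h h' : α → Bool) : ℝ :=
  ((T.filter fun x => h x ≠ h' x).card : ℝ) / T.card

/-- Ball of radius `r` around `h` inside the class `H`, distance measured on `S`. -/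
noncomputable def hypBall {α : Type*} (S : Finset α) (H : Set (α → Bool))
    (h : α → Bool) (r : ℝ) : Set (α → Bool) :=
  {h' ∈ H | hypDist S h h' ≤ r}

/-- Disagreement region (as a finite subset of `S`) of a set `V` of hypotheses. -/
noncomputable def DIS {α : Type*} (S : Finset α) (V : Set (α → Bool)) : Finset α :=
  S.filter fun x => ∃ h₁ ∈ V, ∃ h₂ ∈ V, h₁ x ≠ h₂ x

/-- If `H' ⊆ B_H(h, 2r)` with `h ∈ H'`, `r > 0`, and `h' ∈ H'` satisfies
`D_S(h, h') ≥ r/2`, and `DIS_S(H')` is nonempty, then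
`D_{DIS_S(H')}(h, h') ≥ n·r / (2·|DIS_S(B_H(h, 2r))|)`. -/
theorem stmt4 {α : Type*} (S : Finset α) (hS : 1 ≤ S.card)
    (H H' : Set (α → Bool)) (hH'H : H' ⊆ H)
    (h : α → Bool) (r : ℝ) (hr : 0 < r) (hhH' : h ∈ H')
    (hball : H' ⊆ hypBall S H h (2 * r))
    (h' : α → Bool) (hh' : h' ∈ H') (hd : r / 2 ≤ hypDist S h h')
    (hne : (DIS S H').Nonempty) :
    (S.card : ℝ) * r / (2 * (DIS S (hypBall S H h (2 * r))).card)
      ≤ hypDist (DIS S H') h h' := by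

  classical
  set A := S.filter (fun x => h x ≠ h' x) with hA
  have hnpos : (0:ℝ) < S.card := by exact_mod_cast hS
  -- A ⊆ DIS S H'
  have hAsub : A ⊆ DIS S H' := by
    intro x hx
    simp only [hA, Finset.mem_filter, DIS] at hx ⊢
    exact ⟨hx.1, h, hhH', h', hh', hx.2⟩
  -- filter on DIS S H' equals A
  have hfilt : (DIS S H').filter (fun x => h x ≠ h' x) = A := by
    apply Finset.Subset.antisymm
    · intro x hx
      simp only [DIS, Finset.mem_filter, hA] at hx ⊢
      exact ⟨hx.1.1, hx.2⟩
    · intro x hx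
      exact Finset.mem_filter.2 ⟨hAsub hx, (Finset.mem_filter.1 hx).2⟩
  have hsub : DIS S H' ⊆ DIS S (hypBall S H h (2 * r)) := by
    intro x hx
    simp only [DIS, Finset.mem_filter] at hx ⊢
    obtain ⟨hxS, h₁, h₁m, h₂, h₂m, hne12⟩ := hx
    exact ⟨hxS, h₁, hball h₁m, h₂, hball h₂m, hne12⟩
  have hdpos : 0 < (DIS S H').card := Finset.card_pos.2 hne
  have hDpos : 0 < (DIS S (hypBall S H h (2 * r))).card :=
    Finset.card_pos.2 (hne.mono hsub)
  have hdpos' : (0:ℝ) < (DIS S H').card := by exact_mod_cast hdpos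
  have hDpos' : (0:ℝ) < (DIS S (hypBall S H h (2 * r))).card := by exact_mod_cast hDpos
  have hdle : ((DIS S H').card : ℝ) ≤ (DIS S (hypBall S H h (2 * r))).card := by
    exact_mod_cast Finset.card_le_card hsub
  -- from hd : r/2 ≤ A.card / n
  have hAcard : (S.card : ℝ) * r / 2 ≤ (A.card : ℝ) := by
    rw [hypDist] at hd
    have h2 := (le_div_iff₀ hnpos).1 hd
    calc (S.card : ℝ) * r / 2 = r / 2 * S.card := by ring
      _ ≤ _ := h2
  rw [hypDist, hfilt]
  calc (S.card : ℝ) * r / (2 * (DIS S (hypBall S H h (2 * r))).card)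
      = ((S.card : ℝ) * r / 2) / (DIS S (hypBall S H h (2 * r))).card := by ring
    _ ≤ (A.card : ℝ) / (DIS S (hypBall S H h (2 * r))).card := by gcongr
    _ ≤ (A.card : ℝ) / (DIS S H').card := by gcongr
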